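/- Let G be a finite graph with no loops. Every admissible tubing {T_1,…,T_n} of G induces a unique acyclic orientation of G respecting the tubing, namely orienting each edge {v_i, v_j} as v_i → v_j when T_i ⊊ T_j (compatibility guarantees one of T_i ⊊ T_j or T_j ⊊ T_i holds); moreover, every acyclic orientation of G arises from some admissible tubing in this way. -/

import Mathlib

open SimpleGraph

namespace Cosmo

variable {V : Type*}

/-- A tube of `G` is a connected subgraph. -/
def IsTube (G : SimpleGraph V) (T : G.Subgraph) : Prop := T.Connected

/-- Tubes are nested if one contains the other. -/
def Nested {G : SimpleGraph V} (S T : G.Subgraph) : Prop := S ≤ T ∨ T ≤ S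

/-- Tubes overlap if their (vertex) intersection is nonempty and they are not nested. -/
def Overlapping {G : SimpleGraph V} (S T : G.Subgraph) : Prop :=
  (S.verts ∩ T.verts).Nonempty ∧ ¬ Nested S T

/-- Tubes are incompatible if there is an edge of `G` between them and they are not nested. -/
def Incompatible {G : SimpleGraph V} (S T : G.Subgraph) : Prop :=
  (∃ u w, G.Adj u w ∧ u ∈ S.verts ∧ w ∈ T.verts) ∧ ¬ Nested S T

/-- Tubes are compatible if they are not incompatible. -/
def Compatible {G : SimpleGraph V} (S T : G.Subgraph) : Prop := ¬ Incompatible S T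

/-- A complete tubing: a maximal collection of pairwise non-overlapping tubes. -/
def IsCompleteTubing (G : SimpleGraph V) (𝒯 : Set G.Subgraph) : Prop :=
  Maximal (fun 𝒞 : Set G.Subgraph =>
    (∀ T ∈ 𝒞, IsTube G T) ∧ 𝒞.Pairwise fun S T => ¬ Overlapping S T) 𝒯

/-- An admissible tubing: a maximal collection of pairwise compatible induced tubes. -/
def IsAdmissibleTubing (G : SimpleGraph V) (𝒯 : Set G.Subgraph) : Prop :=
  Maximal (fun 𝒞 : Set G.Subgraph =>
    (∀ T ∈ 𝒞, IsTube G T ∧ T.IsInduced) ∧ 𝒞.Pairwise Compatible) 𝒯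

/-- A labeling of an admissible tubing by the vertices, as in the bijection lemma:
`g v` is the tube associated to `v`, i.e. `v ∈ g v` and `v` avoids all strictly
smaller tubes of the tubing. -/
def IsVertexLabeling (G : SimpleGraph V) (𝒯 : Set G.Subgraph) (g : V → G.Subgraph) : Prop :=
  Set.BijOn g Set.univ 𝒯 ∧ ∀ v, v ∈ (g v).verts ∧ ∀ S ∈ 𝒯, S < g v → v ∉ S.verts


/-- `H` is an orientation of `G`: every edge gets exactly one direction. -/
def IsOrientation {V : Type*} (G : SimpleGraph V) (H : V → V → Prop) : Prop :=
  (∀ u v, (H u v ∨ H v u) ↔ G.Adj u v) ∧ ∀ u v, ¬(H u v ∧ H v u)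

/-- A directed graph is acyclic if it has no directed cycles. -/
def IsAcyclicRel {V : Type*} (H : V → V → Prop) : Prop :=
  ∀ v, ¬ Relation.TransGen H v v

section Aux

variable (G : SimpleGraph V) (le : V → V → Prop)

/-- Reachability within a set of vertices. -/
def reachIn (A : Set V) : V → V → Prop :=
  Relation.ReflTransGen (fun a b => G.Adj a b ∧ a ∈ A ∧ b ∈ A)

/-- Connected component of `v` among the vertices below `v`. -/
def Cset (v : V) : Set V := {w | reachIn G {x | le x v} w v}

/-- The tube of `v`. -/
def tub (v : V) : G.Subgraph := (⊤ : G.Subgraph).induce (Cset G le v)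

variable {G le}

lemma reachIn_mono {A B : Set V} (h : A ⊆ B) {a b : V} (hr : reachIn G A a b) :
    reachIn G B a b :=
  Relation.ReflTransGen.mono (fun _ _ hs => ⟨hs.1, h hs.2.1, h hs.2.2⟩) _ _ hr

lemma reachIn_symm {A : Set V} {a b : V} (hr : reachIn G A a b) : reachIn G A b a :=
  (@Relation.ReflTransGen.symmetric _ _ ⟨fun _ _ hs => ⟨hs.1.symm, hs.2.2, hs.2.1⟩⟩).symm _ _ hr

lemma mem_Cset_self (v : V) : v ∈ Cset G le v := Relation.ReflTransGen.refl

variable (hrefl : ∀ v, le v v) (htrans : ∀ {a b c}, le a b → le b c → le a c)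
  (hanti : ∀ {a b}, le a b → le b a → a = b)

include hrefl in
lemma le_of_mem_Cset {w v : V} (h : w ∈ Cset G le v) : le w v := by
  rcases Relation.ReflTransGen.cases_head h with h' | ⟨c, hs, _⟩
  · exact h' ▸ hrefl v
  · exact hs.2.1

include htrans in
lemma Cset_nested {u v : V} (huv : le u v) (hne : (Cset G le u ∩ Cset G le v).Nonempty) :
    Cset G le u ⊆ Cset G le v := by
  obtain ⟨a, hau, hav⟩ := hne
  intro t ht
  have h1 : reachIn G {x | le x u} t a := ht.trans (reachIn_symm hau)
  have h2 : reachIn G {x | le x v} t a :=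
    reachIn_mono (fun x hx => htrans hx huv) h1
  exact h2.trans hav

/-- Verts of the tube. -/
lemma tub_verts (v : V) : (tub G le v).verts = Cset G le v := rfl

lemma tub_le_tub_of_subset {u v : V} (h : Cset G le u ⊆ Cset G le v) :
    tub G le u ≤ tub G le v :=
  Subgraph.induce_mono le_rfl h

include hrefl htrans hanti in
lemma tub_lt_tub {u v : V} (huv : le u v) (hne : u ≠ v) (hadj : G.Adj u v) :
    tub G le u < tub G le v := by
  have huCv : u ∈ Cset G le v :=
    Relation.ReflTransGen.single ⟨hadj, huv, hrefl v⟩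
  have hsub : Cset G le u ⊆ Cset G le v :=
    Cset_nested @htrans huv ⟨u, mem_Cset_self u, huCv⟩
  refine lt_of_le_of_ne (tub_le_tub_of_subset hsub) (fun h => ?_)
  have : v ∈ Cset G le u := by
    rw [show Cset G le u = (tub G le u).verts from rfl, h]
    exact mem_Cset_self v
  exact hne (hanti (le_of_mem_Cset hrefl this) huv).symm

include hrefl hanti in
lemma tub_injective : Function.Injective (tub G le) := by
  intro u v h
  have hv : Cset G le u = Cset G le v := congrArg Subgraph.verts h
  have h1 : le u v := le_of_mem_Cset hrefl (hv ▸ mem_Cset_self u)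
  have h2 : le v u := le_of_mem_Cset hrefl (hv ▸ mem_Cset_self v)
  exact hanti h1 h2

include hrefl htrans in
lemma tub_le_of_edge {u v p q : V} (huv : le u v) (hadj : G.Adj p q)
    (hp : p ∈ Cset G le u) (hq : q ∈ Cset G le v) : tub G le u ≤ tub G le v := by
  have hpv : le p v := htrans (le_of_mem_Cset hrefl hp) huv
  have hqv : le q v := le_of_mem_Cset hrefl hq
  have hpC : p ∈ Cset G le v := (Relation.ReflTransGen.single ⟨hadj, hpv, hqv⟩).trans hq
  exact tub_le_tub_of_subset (Cset_nested @htrans huv ⟨p, hp, hpC⟩)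

include hrefl htrans in
lemma tub_compatible (htot : ∀ a b, le a b ∨ le b a) (u v : V) :
    Compatible (tub G le u) (tub G le v) := by
  rintro ⟨⟨p, q, hadj, hp, hq⟩, hnest⟩
  rcases htot u v with h | h
  · exact hnest (Or.inl (tub_le_of_edge hrefl htrans h hadj hp hq))
  · exact hnest (Or.inr (tub_le_of_edge hrefl htrans h hadj.symm hq hp))

lemma tub_connected (v : V) : (tub G le v).Connected := by
  rw [Subgraph.connected_iff]
  refine ⟨⟨?_⟩, ⟨v, mem_Cset_self v⟩⟩
  have key : ∀ a (h : a ∈ Cset G le v),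
      (tub G le v).coe.Reachable ⟨a, h⟩ ⟨v, mem_Cset_self v⟩ := by
    intro a h
    induction h using Relation.ReflTransGen.head_induction_on with
    | refl => exact Reachable.refl _
    | head hs hrest ih =>
      refine (Adj.reachable ?_).trans ih
      exact ⟨hrest.head hs, hrest, by simpa using hs.1⟩
  intro x y
  exact (key x x.2).trans (key y y.2).symm

lemma tub_isInduced (v : V) : (tub G le v).IsInduced := by
  intro a ha b hb hadj
  exact ⟨ha, hb, by simpa using hadj⟩

/-- A subgraph's connectivity yields `reachIn` on its vertex set. -/
lemma reachIn_of_connected {T : G.Subgraph} (hT : T.Connected) {a b : V}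
    (ha : a ∈ T.verts) (hb : b ∈ T.verts) : reachIn G T.verts a b := by
  have h := (hT ⟨a, ha⟩ ⟨b, hb⟩)
  rw [reachable_iff_reflTransGen] at h
  exact Relation.ReflTransGen.lift
    (p := fun x y => G.Adj x y ∧ x ∈ T.verts ∧ y ∈ T.verts) Subtype.val
    (fun x y hxy => ⟨T.adj_sub hxy, x.2, y.2⟩) _ _ h

lemma crossing {A B : Set V} {x v : V} (h : reachIn G A x v) (hv : v ∈ B) (hx : x ∉ B) :
    ∃ a b, G.Adj a b ∧ a ∈ A ∧ b ∈ A ∧ a ∉ B ∧ b ∈ B := by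
  induction h using Relation.ReflTransGen.head_induction_on with
  | refl => exact absurd hv hx
  | @head a c hs hrest ih =>
    by_cases hc : c ∈ B
    · exact ⟨a, c, hs.1, hs.2.1, hs.2.2, hx, hc⟩
    · exact ih hc

lemma exists_max_finset (htot : ∀ a b, le a b ∨ le b a) (htrans : ∀ {a b c}, le a b → le b c → le a c)
    (s : Finset V) (hs : s.Nonempty) : ∃ v ∈ s, ∀ w ∈ s, le w v := by
  induction s using Finset.cons_induction with
  | empty => simp at hs
  | cons a s ha ih =>
    rcases s.eq_empty_or_nonempty with rfl | hs'
    · refine ⟨a, by simp, ?_⟩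
      intro w hw
      simp only [Finset.mem_cons, Finset.notMem_empty, or_false] at hw
      rcases htot a a with h | h <;> exact hw ▸ h
    · obtain ⟨v, hv, hmax⟩ := ih hs'
      rcases htot v a with h | h
      · refine ⟨a, by simp, fun w hw => ?_⟩
        rcases Finset.mem_cons.mp hw with rfl | hw'
        · rcases htot w w with h' | h' <;> exact h'
        · exact htrans (hmax w hw') h
      · refine ⟨v, Finset.mem_cons_of_mem hv, fun w hw => ?_⟩
        rcases Finset.mem_cons.mp hw with rfl | hw'
        · exact h
        · exact hmax w hw'

include hrefl htrans hanti in
lemma tub_maximal [Fintype V] (htot : ∀ a b, le a b ∨ le b a)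
    {𝒞 : Set G.Subgraph} (hprop : (∀ T ∈ 𝒞, IsTube G T ∧ T.IsInduced) ∧ 𝒞.Pairwise Compatible)
    (hsub : Set.range (tub G le) ⊆ 𝒞) {T : G.Subgraph} (hT : T ∈ 𝒞) :
    T ∈ Set.range (tub G le) := by
  classical
  obtain ⟨hconn, hind⟩ := hprop.1 T hT
  have hne : T.verts.Nonempty := hconn.nonempty
  obtain ⟨v, hv, hmax⟩ := exists_max_finset htot @htrans T.verts.toFinset
    (by simpa [Set.toFinset_nonempty] using hne)
  rw [Set.mem_toFinset] at hv
  have hmax' : ∀ w ∈ T.verts, le w v := fun w hw => hmax w (Set.mem_toFinset.mpr hw)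
  -- T.verts ⊆ Cset v
  have hTC : T.verts ⊆ Cset G le v := by
    intro t ht
    exact reachIn_mono (fun x hx => hmax' x hx) (reachIn_of_connected hconn ht hv)
  -- Cset v ⊆ T.verts
  have hCT : Cset G le v ⊆ T.verts := by
    intro x hx
    by_contra hxT
    obtain ⟨a, b, hadj, haA, hbA, haT, hbT⟩ := crossing hx hv hxT
    -- a is in Cset v
    have haC : a ∈ Cset G le v :=
      (Relation.ReflTransGen.single ⟨hadj, haA, hbA⟩).trans (hTC hbT)
    have hTa : tub G le a ∈ 𝒞 := hsub ⟨a, rfl⟩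
    have hneq : T ≠ tub G le a := by
      intro h
      exact haT (by rw [h]; exact mem_Cset_self a)
    refine hprop.2 hT hTa hneq ⟨⟨b, a, hadj.symm, hbT, mem_Cset_self a⟩, ?_⟩
    rintro (hle | hle)
    · -- T ≤ tub a : then v ∈ Cset a, so le v a; but le a v and a ≠ v
      have hvCa : v ∈ Cset G le a := hle.1 hv
      have h1 : le v a := le_of_mem_Cset hrefl hvCa
      have h2 : le a v := haA
      exact haT ((hanti h2 h1) ▸ hv)
    · exact haT (hle.1 (mem_Cset_self a))
  have hverts : T.verts = Cset G le v := Set.Subset.antisymm hTC hCT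
  refine ⟨v, ?_⟩
  refine Subgraph.ext hverts.symm ?_
  ext x y
  constructor
  · rintro ⟨hx, hy, hxy⟩
    exact hind (hCT hx) (hCT hy) (by simpa using hxy)
  · intro hxy
    exact ⟨hTC (T.edge_vert hxy), hTC (T.edge_vert hxy.symm), by simpa using T.adj_sub hxy⟩

end Aux

theorem acyclicOrientation_of_admissibleTubing {V : Type*} [Fintype V] (G : SimpleGraph V) :
    (∀ (𝒯 : Set G.Subgraph) (g : V → G.Subgraph),
      IsAdmissibleTubing G 𝒯 → IsVertexLabeling G 𝒯 g →
      ∃! H : V → V → Prop, IsOrientation G H ∧ IsAcyclicRel H ∧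
        ∀ u v, H u v → g u < g v) ∧
    (∀ H : V → V → Prop, IsOrientation G H → IsAcyclicRel H →
      ∃ (𝒯 : Set G.Subgraph) (g : V → G.Subgraph),
        IsAdmissibleTubing G 𝒯 ∧ IsVertexLabeling G 𝒯 g ∧
        ∀ u v, H u v → g u < g v) := by
  constructor
  · -- Part 1
    intro 𝒯 g hadm hlab
    have hginj : Function.Injective g := fun u v h => hlab.1.2.1 trivial trivial h
    have hmem : ∀ v, g v ∈ 𝒯 := fun v => hlab.1.1 trivial
    refine ⟨fun u v => G.Adj u v ∧ g u < g v, ⟨⟨?_, ?_⟩, ?_, ?_⟩, ?_⟩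
    · -- orientation: edge iff
      intro u v
      constructor
      · rintro (⟨h, _⟩ | ⟨h, _⟩)
        · exact h
        · exact h.symm
      · intro hadj
        have hne : g u ≠ g v := fun h => hadj.ne (hginj h)
        have hcompat : Compatible (g u) (g v) := hadm.1.2 (hmem u) (hmem v) hne
        have hnest : Nested (g u) (g v) := by
          by_contra hn
          exact hcompat ⟨⟨u, v, hadj, (hlab.2 u).1, (hlab.2 v).1⟩, hn⟩
        rcases hnest with h | h
        · exact Or.inl ⟨hadj, lt_of_le_of_ne h hne⟩
        · exact Or.inr ⟨hadj.symm, lt_of_le_of_ne h (Ne.symm hne)⟩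
    · -- no double edges
      rintro u v ⟨⟨_, h1⟩, ⟨_, h2⟩⟩
      exact absurd h2 (not_lt_of_gt h1)
    · -- acyclic
      intro v hcyc
      have : ∀ {a b}, Relation.TransGen (fun u v => G.Adj u v ∧ g u < g v) a b → g a < g b := by
        intro a b h
        induction h with
        | single h => exact h.2
        | tail _ h ih => exact ih.trans h.2
      exact absurd (this hcyc) (lt_irrefl _)
    · exact fun u v h => h.2
    · -- uniqueness
      intro H' ⟨hor', hacyc', hresp'⟩
      funext u v
      apply propext
      constructor
      · intro h
        exact ⟨(hor'.1 u v).mp (Or.inl h), hresp' u v h⟩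
      · rintro ⟨hadj, hlt⟩
        rcases (hor'.1 u v).mpr hadj with h | h
        · exact h
        · exact absurd (hresp' v u h) (not_lt_of_gt hlt)
  · -- Part 2
    intro H hor hacyc
    -- linear extension of the reachability partial order
    haveI hpo : IsPartialOrder V (Relation.ReflTransGen H) :=
      { refl := fun _ => Relation.ReflTransGen.refl
        trans := fun _ _ _ h1 h2 => h1.trans h2
        antisymm := fun a b hab hba => by
          by_contra hne
          rcases Relation.ReflTransGen.cases_head hab with h | ⟨c, hc, hcb⟩
          · exact hne h
          · exact hacyc a (Relation.TransGen.head' hc (hcb.trans hba)) }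
    obtain ⟨le, hlin, hext⟩ := extend_partialOrder (Relation.ReflTransGen H)
    haveI := hlin
    have hrefl : ∀ v, le v v := fun v => refl_of le v
    have htrans : ∀ {a b c}, le a b → le b c → le a c :=
      fun h1 h2 => _root_.trans_of le h1 h2
    have hanti : ∀ {a b}, le a b → le b a → a = b := fun h1 h2 => antisymm_of le h1 h2
    have htot : ∀ a b, le a b ∨ le b a := fun a b => total_of le a b
    have hHle : ∀ {u v}, H u v → le u v := fun h => hext _ _ (Relation.ReflTransGen.single h)
    have hHne : ∀ {u v}, H u v → u ≠ v := by
      rintro u v h rfl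
      exact hacyc u (Relation.TransGen.single h)
    refine ⟨Set.range (tub G le), tub G le, ⟨⟨?_, ?_⟩, ?_⟩, ⟨⟨?_, ?_, ?_⟩, ?_⟩, ?_⟩
    · rintro T ⟨v, rfl⟩
      exact ⟨tub_connected v, tub_isInduced v⟩
    · rintro S ⟨u, rfl⟩ T ⟨v, rfl⟩ _
      exact tub_compatible hrefl @htrans htot u v
    · -- maximality
      intro 𝒞 hprop hsub T hT
      exact tub_maximal hrefl @htrans @hanti htot hprop hsub hT
    · exact fun v _ => Set.mem_range_self v
    · exact fun u _ v _ h => tub_injective hrefl @hanti h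
    · rintro S ⟨v, rfl⟩
      exact ⟨v, trivial, rfl⟩
    · intro v
      refine ⟨mem_Cset_self v, ?_⟩
      rintro S ⟨u, rfl⟩ hlt hvS
      have h1 : le v u := le_of_mem_Cset hrefl hvS
      have h2 : le u v := le_of_mem_Cset hrefl (hlt.le.1 (mem_Cset_self u))
      exact absurd (congrArg (tub G le) (hanti h2 h1)) (ne_of_lt hlt)
    · intro u v h
      exact tub_lt_tub hrefl @htrans @hanti (hHle h) (hHne h) ((hor.1 u v).mp (Or.inl h))

end Cosmo
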